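/- For $p > q \ge 1$, the restriction of the Poisson difference operator $D: L^0(\Omega;H) \to L^0(\Omega\times E;H)$ to $L^p(\Omega;H)$ is a continuous mapping from $L^p(\Omega;H)$ to $L^0(E; L^q(\Omega;H))$ (the space of measurable functions from $E$ to $L^q(\Omega;H)$ with the topology of local convergence in measure). -/

import Mathlib

open MeasureTheory Filter
open scoped ENNReal RealInnerProductSpace

/-- **Mecke's formula** (add-one form), characterizing Poisson random measures
with σ-finite intensity `μ`. -/
def MeckeAdd {Ω E : Type*} [MeasurableSpace Ω] [MeasurableSpace E]
    (P : Measure Ω) (μ : Measure E) (N : Ω → Measure E) : Prop :=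
  ∀ f : Measure E → E → ℝ≥0∞, Measurable (Function.uncurry f) →
    ∫⁻ ω, ∫⁻ x, f (N ω) x ∂(N ω) ∂P
      = ∫⁻ ω, ∫⁻ x, f (N ω + Measure.dirac x) x ∂μ ∂P

theorem aux_min_add (a b : ℝ≥0∞) : min 1 (a + b) ≤ min 1 a + b :=
  calc min 1 (a+b) ≤ min (1+b) (a+b) :=
        le_min ((min_le_left _ _).trans le_self_add) (min_le_right _ _)
    _ = min 1 a + b := min_add_add_right 1 a b

theorem aux_min_le {u ε : ℝ≥0∞} {qr : ℝ} (hε0 : ε ≠ 0) (hε1 : ε ≤ 1) (hqr : 0 ≤ qr) :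
    min 1 u ≤ ε + ε⁻¹ ^ qr * u ^ qr := by
  rcases le_or_gt u ε with h | h
  · exact le_add_right ((min_le_right _ _).trans h)
  · refine le_add_left ?_
    have h1 : (1:ℝ≥0∞) = ε⁻¹ * ε :=
      (ENNReal.inv_mul_cancel hε0 (hε1.trans_lt ENNReal.one_lt_top).ne).symm
    calc min 1 u ≤ 1 := min_le_left _ _
      _ = 1 ^ qr := (ENNReal.one_rpow qr).symm
      _ ≤ (ε⁻¹ * u) ^ qr := by
          refine ENNReal.rpow_le_rpow ?_ hqr
          rw [h1]; exact mul_le_mul_right h.le _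
      _ = ε⁻¹ ^ qr * u ^ qr := ENNReal.mul_rpow_of_nonneg _ _ hqr

theorem aux_moment_lt_top {Ω E : Type*} [MeasurableSpace Ω] [MeasurableSpace E]
    (P : Measure Ω) [IsProbabilityMeasure P] (μ : Measure E)
    (N : Ω → Measure E) (hMecke : MeckeAdd P μ N) (hN : Measurable N)
    {B : Set E} (hB : MeasurableSet B) (hμB : μ B < ∞) :
    ∀ k : ℕ, ∫⁻ ω, (N ω B) ^ k ∂P < ∞ := by
  intro k
  have hMB : Measurable fun ν : Measure E => ν B := Measure.measurable_coe hB
  have hNB : Measurable fun ω => N ω B := hMB.comp hN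
  induction k with
  | zero => simp
  | succ k ih =>
    have hind : Measurable (B.indicator fun _ => (1:ℝ≥0∞)) := measurable_const.indicator hB
    have hkey := hMecke (fun ν x => (ν B) ^ k * B.indicator (fun _ => (1:ℝ≥0∞)) x)
      (((hMB.comp measurable_fst).pow_const k).mul (hind.comp measurable_snd))
    have hL : ∀ ω, ∫⁻ x, (N ω B) ^ k * B.indicator (fun _ => (1:ℝ≥0∞)) x ∂(N ω)
        = (N ω B) ^ (k+1) := by
      intro ω
      rw [lintegral_const_mul _ hind, lintegral_indicator hB, setLIntegral_one, pow_succ]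
    have hR : ∀ ω, ∫⁻ x, ((N ω + Measure.dirac x) B) ^ k * B.indicator (fun _ => (1:ℝ≥0∞)) x ∂μ
        = (N ω B + 1) ^ k * μ B := by
      intro ω
      have h1 : ∀ x, ((N ω + Measure.dirac x) B) ^ k * B.indicator (fun _ => (1:ℝ≥0∞)) x
          = B.indicator (fun x => ((N ω + Measure.dirac x) B) ^ k) x := by
        intro x
        by_cases hx : x ∈ B <;> simp [hx]
      have h2 : ∫⁻ x in B, ((N ω + Measure.dirac x) B) ^ k ∂μ
          = ∫⁻ _ in B, (N ω B + 1) ^ k ∂μ :=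
        setLIntegral_congr_fun hB (fun x hx => by
          simp [Measure.add_apply, Measure.dirac_apply_of_mem hx])
      rw [lintegral_congr h1, lintegral_indicator hB, h2, setLIntegral_const]
    simp only [hL, hR] at hkey
    rw [hkey, lintegral_mul_const' _ _ hμB.ne]
    have hbound : ∀ ω, (N ω B + 1) ^ k ≤ 2 ^ k * ((N ω B) ^ k + 1) := by
      intro ω
      calc (N ω B + 1) ^ k ≤ (2 * max (N ω B) 1) ^ k := by
            refine pow_le_pow_left₀ zero_le ?_ k
            rw [two_mul]
            exact add_le_add (le_max_left _ _) (le_max_right _ _)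
        _ = 2 ^ k * (max (N ω B) 1) ^ k := mul_pow 2 _ k
        _ ≤ 2 ^ k * ((N ω B) ^ k + 1) := by
            refine mul_le_mul_right ?_ _
            rcases le_total (N ω B) 1 with h | h
            · rw [max_eq_right h, one_pow]; exact le_add_self
            · rw [max_eq_left h]; exact le_self_add
    calc (∫⁻ ω, (N ω B + 1) ^ k ∂P) * μ B ≤ (∫⁻ ω, 2 ^ k * ((N ω B) ^ k + 1) ∂P) * μ B := by
          gcongr with ω; exact hbound ω
      _ = 2 ^ k * ((∫⁻ ω, (N ω B) ^ k ∂P) + 1) * μ B := by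
          rw [lintegral_const_mul _ (show Measurable fun ω => (N ω B) ^ k + 1 from (hNB.pow_const k).add measurable_const),
            lintegral_add_right _ measurable_const, lintegral_one, measure_univ]
      _ < ∞ := by
          refine ENNReal.mul_lt_top (ENNReal.mul_lt_top ?_ ?_) hμB
          · exact ENNReal.pow_lt_top (by norm_num : (2:ℝ≥0∞) < ∞)
          · exact ENNReal.add_lt_top.mpr ⟨ih, ENNReal.one_lt_top⟩

theorem aux_meas_add {Ω E : Type*} [MeasurableSpace Ω] [MeasurableSpace E]
    {N : Ω → Measure E} (hN : Measurable N) :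
    Measurable fun pr : Ω × E => N pr.1 + Measure.dirac pr.2 := by
  apply Measure.measurable_of_measurable_coe
  intro s hs
  simp only [Measure.add_apply]
  exact ((Measure.measurable_coe hs).comp (hN.comp measurable_fst)).add
    (((Measure.measurable_coe hs).comp Measure.measurable_dirac).comp measurable_snd)

theorem aux_mecke_eq {Ω E H : Type*} [MeasurableSpace Ω] [MeasurableSpace E]
    [NormedAddCommGroup H]
    (P : Measure Ω) [IsProbabilityMeasure P] (μ : Measure E) [SigmaFinite μ]
    (N : Ω → Measure E) (hMecke : MeckeAdd P μ N) (hN : Measurable N)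
    {B : Set E} (hB : MeasurableSet B)
    (h : Measure E → H) (hh : StronglyMeasurable h) (qr : ℝ) :
    ∫⁻ x in B, ∫⁻ ω, (‖h (N ω + Measure.dirac x)‖₊ : ℝ≥0∞) ^ qr ∂P ∂μ
      = ∫⁻ ω, (‖h (N ω)‖₊ : ℝ≥0∞) ^ qr * N ω B ∂P := by
  have hind : Measurable (B.indicator fun _ => (1:ℝ≥0∞)) := measurable_const.indicator hB
  have hnorm : Measurable fun ν : Measure E => (‖h ν‖₊ : ℝ≥0∞) ^ qr := hh.enorm.pow_const qr
  have hkey := hMecke (fun ν x => (‖h ν‖₊ : ℝ≥0∞) ^ qr * B.indicator (fun _ => (1:ℝ≥0∞)) x)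
    ((hnorm.comp measurable_fst).mul (hind.comp measurable_snd))
  have hL : ∀ ω, ∫⁻ x, (‖h (N ω)‖₊ : ℝ≥0∞) ^ qr * B.indicator (fun _ => (1:ℝ≥0∞)) x ∂(N ω)
      = (‖h (N ω)‖₊ : ℝ≥0∞) ^ qr * N ω B := by
    intro ω
    rw [lintegral_const_mul _ hind, lintegral_indicator hB, setLIntegral_one]
  have hR : ∀ ω, ∫⁻ x, (‖h (N ω + Measure.dirac x)‖₊ : ℝ≥0∞) ^ qr
        * B.indicator (fun _ => (1:ℝ≥0∞)) x ∂μ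
      = ∫⁻ x in B, (‖h (N ω + Measure.dirac x)‖₊ : ℝ≥0∞) ^ qr ∂μ := by
    intro ω
    rw [← lintegral_indicator hB]
    refine lintegral_congr fun x => ?_
    by_cases hx : x ∈ B <;> simp [hx]
  simp only [hL, hR] at hkey
  rw [hkey]
  refine lintegral_lintegral_swap ?_
  exact ((hnorm.comp (aux_meas_add hN)).comp measurable_swap).aemeasurable

theorem D_continuous_Lp_to_L0_Lq
    {Ω E H : Type*} [MeasurableSpace Ω] [MeasurableSpace E]
    [NormedAddCommGroup H] [InnerProductSpace ℝ H] [CompleteSpace H]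
    [TopologicalSpace.SeparableSpace H]
    (P : Measure Ω) [IsProbabilityMeasure P] (μ : Measure E) [SigmaFinite μ]
    (N : Ω → Measure E) (hMecke : MeckeAdd P μ N) (hN : Measurable N)
    (p q : ℝ≥0∞) (hp' : p ≠ ∞) (hq : 1 ≤ q) (hqp : q < p)
    (F : ℕ → Ω → H) (f : ℕ → Measure E → H) (G : Ω → H) (g : Measure E → H)
    (hf : ∀ n, StronglyMeasurable (f n)) (hg : StronglyMeasurable g)
    (hFf : ∀ n, ∀ᵐ ω ∂P, F n ω = f n (N ω)) (hGg : ∀ᵐ ω ∂P, G ω = g (N ω))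
    (hFm : ∀ n, MemLp (F n) p P) (hGm : MemLp G p P)
    (hconv : Tendsto (fun n => eLpNorm (fun ω => F n ω - G ω) p P) atTop (nhds 0)) :
    ∀ B : Set E, MeasurableSet B → μ B < ∞ →
      Tendsto (fun n => ∫⁻ x in B,
          min 1 (eLpNorm (fun ω =>
            (f n (N ω + Measure.dirac x) - F n ω) - (g (N ω + Measure.dirac x) - G ω)) q P) ∂μ)
        atTop (nhds 0) := by
  intro B hB hμB
  -- exponents
  have hq0 : q ≠ 0 := (zero_lt_one.trans_le hq).ne'
  have hq' : q ≠ ∞ := (hqp.trans_le le_top).ne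
  have hp0 : p ≠ 0 := (zero_lt_one.trans_le (hq.trans hqp.le)).ne'
  set qr : ℝ := q.toReal with hqrdef
  set prr : ℝ := p.toReal with hprdef
  have hqr1 : 1 ≤ qr := by simpa using ENNReal.toReal_mono hq' hq
  have hqr0 : 0 < qr := zero_lt_one.trans_le hqr1
  have hpr : qr < prr := ENNReal.toReal_strict_mono hp' hqp
  set r : ℝ := prr / qr with hrdef
  have hr1 : 1 < r := (one_lt_div hqr0).2 hpr
  set s : ℝ := Real.conjExponent r with hsdef
  have hrs : r.HolderConjugate s := Real.HolderConjugate.conjExponent hr1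
  have hs0 : 0 < s := hrs.symm.pos
  -- moment bound
  have hNB : Measurable fun ω => N ω B := (Measure.measurable_coe hB).comp hN
  have hmom : ∫⁻ ω, (N ω B) ^ s ∂P < ∞ := by
    set k := ⌈s⌉₊ with hk
    calc ∫⁻ ω, (N ω B) ^ s ∂P ≤ ∫⁻ ω, (1 + (N ω B) ^ k) ∂P := by
          refine lintegral_mono fun ω => ?_
          rcases le_total (N ω B) 1 with h | h
          · calc (N ω B) ^ s ≤ (1:ℝ≥0∞) ^ s := ENNReal.rpow_le_rpow h hs0.le
              _ = 1 := ENNReal.one_rpow s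
              _ ≤ _ := le_self_add
          · calc (N ω B) ^ s ≤ (N ω B) ^ (k:ℝ) :=
                  ENNReal.rpow_le_rpow_of_exponent_le h (Nat.le_ceil s)
              _ = (N ω B) ^ k := ENNReal.rpow_natCast _ k
              _ ≤ _ := le_add_self
      _ = 1 + ∫⁻ ω, (N ω B) ^ k ∂P := by
          rw [lintegral_add_left measurable_const, lintegral_one, measure_univ]
      _ < ∞ := ENNReal.add_lt_top.mpr
          ⟨ENNReal.one_lt_top, aux_moment_lt_top P μ N hMecke hN hB hμB k⟩
  set Ms : ℝ≥0∞ := (∫⁻ ω, (N ω B) ^ s ∂P) ^ (1/s) with hMsdef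
  have hMs : Ms ≠ ∞ :=
    (ENNReal.rpow_lt_top_of_nonneg (by positivity) hmom.ne).ne
  set c : ℕ → ℝ≥0∞ := fun n => eLpNorm (fun ω => F n ω - G ω) p P with hcdef
  -- key estimate via Mecke + Hölder
  have hkey : ∀ n, (∫⁻ x in B, ∫⁻ ω,
      (‖f n (N ω + Measure.dirac x) - g (N ω + Measure.dirac x)‖₊ : ℝ≥0∞) ^ qr ∂P ∂μ)
      ≤ c n ^ qr * Ms := by
    intro n
    have heq := aux_mecke_eq P μ N hMecke hN hB (fun ν => f n ν - g ν) ((hf n).sub hg) qr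
    rw [heq]
    have hu : AEMeasurable (fun ω => (‖f n (N ω) - g (N ω)‖₊ : ℝ≥0∞) ^ qr) P :=
      ((((hf n).sub hg).enorm.comp hN).pow_const qr).aemeasurable
    have hH := ENNReal.lintegral_mul_le_Lp_mul_Lq P hrs hu hNB.aemeasurable
    simp only [Pi.mul_apply] at hH
    refine hH.trans (le_of_eq ?_)
    have h1 : (∫⁻ ω, ((‖f n (N ω) - g (N ω)‖₊ : ℝ≥0∞) ^ qr) ^ r ∂P) ^ (1/r) = c n ^ qr := by
      have e1 : ∫⁻ ω, ((‖f n (N ω) - g (N ω)‖₊ : ℝ≥0∞) ^ qr) ^ r ∂P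
          = ∫⁻ ω, (‖F n ω - G ω‖₊ : ℝ≥0∞) ^ prr ∂P := by
        refine lintegral_congr_ae ?_
        filter_upwards [hFf n, hGg] with ω h1 h2
        rw [h1, h2, ← ENNReal.rpow_mul, mul_div_cancel₀ prr hqr0.ne']
      rw [e1]
      simp only [hcdef]
      rw [eLpNorm_eq_lintegral_rpow_enorm_toReal hp0 hp', ← ENNReal.rpow_mul]
      congr 1
      rw [hrdef]
      field_simp
      rfl
    rw [h1]
  -- convergence
  rw [ENNReal.tendsto_nhds_zero]
  intro δ hδ
  set δ' := min δ 1 with hδ'def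
  have hδ'0 : δ' ≠ 0 := (lt_min hδ zero_lt_one).ne'
  have hδ'1 : δ' ≤ 1 := min_le_right _ _
  have hd3 : δ' / 3 ≠ 0 := (ENNReal.div_pos hδ'0 (by norm_num)).ne'
  have hμB1 : μ B + 1 ≠ ∞ := by
    simp [ENNReal.add_eq_top, hμB.ne]
  set ε := δ' / 3 / (μ B + 1) with hεdef
  have hε0 : ε ≠ 0 := (ENNReal.div_pos hd3 hμB1).ne'
  have hε1 : ε ≤ 1 := by
    refine ENNReal.div_le_of_le_mul ?_
    calc δ' / 3 ≤ δ' := ENNReal.div_le_of_le_mul (le_mul_of_one_le_right zero_le (by norm_num))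
      _ ≤ 1 := hδ'1
      _ ≤ 1 * (μ B + 1) := by
          rw [one_mul]; exact le_add_self
  have hεinv : ε⁻¹ ^ qr ≠ ∞ :=
    (ENNReal.rpow_lt_top_of_nonneg hqr0.le (ENNReal.inv_ne_top.2 hε0)).ne
  set a := ε⁻¹ ^ qr * Ms with hadef
  have ha : a ≠ ∞ := ENNReal.mul_ne_top hεinv hMs
  have ha1 : a + 1 ≠ ∞ := by simp [ENNReal.add_eq_top, ha]
  set η := min (δ' / 3 / (μ B + 1)) (min 1 (δ' / 3 / (a + 1))) with hηdef
  have hη0 : 0 < η :=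
    lt_min (ENNReal.div_pos hd3 hμB1) (lt_min zero_lt_one (ENNReal.div_pos hd3 ha1))
  filter_upwards [hconv.eventually_lt_const hη0] with n hn
  -- pointwise estimate
  have hptwise : ∀ x, min 1 (eLpNorm (fun ω =>
      (f n (N ω + Measure.dirac x) - F n ω) - (g (N ω + Measure.dirac x) - G ω)) q P)
      ≤ (ε + c n) + ε⁻¹ ^ qr * ∫⁻ ω,
        (‖f n (N ω + Measure.dirac x) - g (N ω + Measure.dirac x)‖₊ : ℝ≥0∞) ^ qr ∂P := by
    intro x
    set S : ℝ≥0∞ := eLpNorm (fun ω =>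
      f n (N ω + Measure.dirac x) - g (N ω + Measure.dirac x)) q P with hSdef
    have hmx : Measurable fun ω => N ω + Measure.dirac x :=
      (aux_meas_add hN).comp (measurable_id.prodMk measurable_const)
    have hSm : AEStronglyMeasurable (fun ω =>
        f n (N ω + Measure.dirac x) - g (N ω + Measure.dirac x)) P :=
      (((hf n).sub hg).comp_measurable hmx).aestronglyMeasurable
    have hFG : AEStronglyMeasurable (fun ω => F n ω - G ω) P := ((hFm n).1).sub (hGm.1)
    have hT : eLpNorm (fun ω =>
        (f n (N ω + Measure.dirac x) - F n ω) - (g (N ω + Measure.dirac x) - G ω)) q P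
        ≤ S + c n := by
      have hae : (fun ω =>
          (f n (N ω + Measure.dirac x) - F n ω) - (g (N ω + Measure.dirac x) - G ω)) =ᵐ[P]
          (fun ω => f n (N ω + Measure.dirac x) - g (N ω + Measure.dirac x))
            - (fun ω => F n ω - G ω) := by
        filter_upwards [hFf n, hGg] with ω h1 h2
        simp only [Pi.sub_apply]
        rw [h1, h2]; abel
      rw [eLpNorm_congr_ae hae]
      refine (eLpNorm_sub_le hSm hFG hq).trans ?_
      refine add_le_add_right ?_ S
      exact (eLpNorm_le_eLpNorm_of_exponent_le hqp.le hFG).trans le_rfl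
    have hS : S ^ qr = ∫⁻ ω,
        (‖f n (N ω + Measure.dirac x) - g (N ω + Measure.dirac x)‖₊ : ℝ≥0∞) ^ qr ∂P := by
      rw [hSdef, eLpNorm_eq_lintegral_rpow_enorm_toReal hq0 hq', ← ENNReal.rpow_mul,
        one_div, inv_mul_cancel₀ hqr0.ne', ENNReal.rpow_one]; rfl
    calc min 1 (eLpNorm (fun ω =>
        (f n (N ω + Measure.dirac x) - F n ω) - (g (N ω + Measure.dirac x) - G ω)) q P)
        ≤ min 1 (S + c n) := min_le_min le_rfl hT
      _ ≤ min 1 S + c n := aux_min_add S (c n)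
      _ ≤ (ε + ε⁻¹ ^ qr * S ^ qr) + c n :=
          add_le_add_left (aux_min_le hε0 hε1 hqr0.le) (c n)
      _ = (ε + c n) + ε⁻¹ ^ qr * S ^ qr := by ring
      _ = (ε + c n) + ε⁻¹ ^ qr * _ := by rw [hS]
  calc ∫⁻ x in B, min 1 (eLpNorm (fun ω =>
        (f n (N ω + Measure.dirac x) - F n ω) - (g (N ω + Measure.dirac x) - G ω)) q P) ∂μ
      ≤ ∫⁻ x in B, ((ε + c n) + ε⁻¹ ^ qr * ∫⁻ ω,
          (‖f n (N ω + Measure.dirac x) - g (N ω + Measure.dirac x)‖₊ : ℝ≥0∞) ^ qr ∂P) ∂μ :=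
        lintegral_mono hptwise
    _ = (ε + c n) * μ B + ε⁻¹ ^ qr * ∫⁻ x in B, (∫⁻ ω,
          (‖f n (N ω + Measure.dirac x) - g (N ω + Measure.dirac x)‖₊ : ℝ≥0∞) ^ qr ∂P) ∂μ := by
        rw [lintegral_add_left measurable_const, setLIntegral_const,
          lintegral_const_mul' _ _ hεinv]
    _ ≤ (ε + c n) * μ B + ε⁻¹ ^ qr * (c n ^ qr * Ms) := by
        gcongr
        exact hkey n
    _ = ε * μ B + c n * μ B + a * c n ^ qr := by rw [hadef]; ring
    _ ≤ δ' / 3 + δ' / 3 + δ' / 3 := by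
        have hμB10 : μ B + 1 ≠ 0 := (zero_lt_one.trans_le le_add_self).ne'
        have h1 : ε * μ B ≤ δ' / 3 := by
          calc ε * μ B ≤ ε * (μ B + 1) := mul_le_mul_right le_self_add ε
            _ = δ' / 3 := ENNReal.div_mul_cancel hμB10 hμB1
        have h2 : c n * μ B ≤ δ' / 3 := by
          calc c n * μ B ≤ (δ' / 3 / (μ B + 1)) * (μ B + 1) :=
                mul_le_mul' (hn.le.trans (min_le_left _ _)) le_self_add
            _ = δ' / 3 := ENNReal.div_mul_cancel hμB10 hμB1
        have h3 : a * c n ^ qr ≤ δ' / 3 := by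
          have hη1 : η ≤ 1 := (min_le_right _ _).trans (min_le_left _ _)
          have hcη : c n ^ qr ≤ δ' / 3 / (a + 1) := by
            calc c n ^ qr ≤ η ^ qr := ENNReal.rpow_le_rpow hn.le hqr0.le
              _ ≤ η ^ (1:ℝ) := ENNReal.rpow_le_rpow_of_exponent_ge hη1 hqr1
              _ = η := ENNReal.rpow_one η
              _ ≤ δ' / 3 / (a + 1) := (min_le_right _ _).trans (min_le_right _ _)
          calc a * c n ^ qr ≤ (a + 1) * (δ' / 3 / (a + 1)) :=
                mul_le_mul' le_self_add hcη
            _ = δ' / 3 := ENNReal.mul_div_cancel (zero_lt_one.trans_le le_add_self).ne' ha1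
        exact add_le_add (add_le_add h1 h2) h3
    _ = δ' := ENNReal.add_thirds δ'
    _ ≤ δ := min_le_left _ _
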